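/- Let k ≤ m = dim_K L. The following are equivalent: (a) there exists an injective homomorphism of Lie algebras over K, φ : L → Der_K(R), such that the R-linear span of φ(L) in Der_K(R) has dimension k over R; (b) there exist an R-Lie subalgebra L̂ of R ⊗[K] L with finrank_R((R ⊗[K] L) ⧸ L̂) = k and L̂ ∩ {1 ⊗ l : l ∈ L} = {0}, elements b̄₁, …, b̄_k ∈ R ⊗[K] L with L̂ + R·b̄₁ + ⋯ + R·b̄_k = R ⊗[K] L, and R-linearly independent derivations D₁, …, D_k ∈ Der_K(R), such that the R-submodule of 𝔇 spanned by (D₁, b̄₁), …, (D_k, b̄_k) together with {0} × L̂ is closed under the Lie bracket of 𝔇. -/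

import Mathlib

open TensorProduct

/-- The Lie bracket of the semidirect product `𝔇 = Der_K(R) ⋉ (R ⊗[K] L)`:
`[(D, x), (D', x')] = ([D, D'], [x, x'] + D̃ x' - D̃' x)`, where `D̃` is the `K`-linear
endomorphism of `R ⊗[K] L` determined by `D̃ (r ⊗ l) = D r ⊗ l`. -/
noncomputable def semidirectBracket (K R L : Type) [Field K] [CommRing R] [Algebra K R]
    [LieRing L] [LieAlgebra K L]
    (p q : Derivation K R R × (R ⊗[K] L)) : Derivation K R R × (R ⊗[K] L) :=
  (⁅p.1, q.1⁆,
    ⁅p.2, q.2⁆ + LinearMap.rTensor L (p.1 : R →ₗ[K] R) q.2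
      - LinearMap.rTensor L (q.1 : R →ₗ[K] R) p.2)

namespace InjSubAux

variable {K R L : Type} [Field K] [Field R] [Algebra K R] [LieRing L] [LieAlgebra K L]

lemma smul_bracket_smul (r s : R) (D E : Derivation K R R) :
    ⁅r • D, s • E⁆ = (r * s) • ⁅D, E⁆ + (r * D s) • E - (s * E r) • D := by
  ext a
  simp only [Derivation.commutator_apply, Derivation.coe_smul_linearMap, Derivation.smul_apply,
    Derivation.leibniz, smul_eq_mul, Derivation.add_apply, Derivation.sub_apply]
  ring

/-- The `R`-linear extension of `φ` to `R ⊗[K] L`. -/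
noncomputable abbrev psi (φ : L →ₗ[K] Derivation K R R) :
    R ⊗[K] L →ₗ[R] Derivation K R R := φ.liftBaseChange R

lemma psi_tmul (φ : L →ₗ[K] Derivation K R R) (r : R) (l : L) :
    psi φ (r ⊗ₜ[K] l) = r • φ l := rfl

lemma psi_bracket (φ : L →ₗ⁅K⁆ Derivation K R R) (x y : R ⊗[K] L) :
    psi (φ : L →ₗ[K] Derivation K R R) (⁅x, y⁆
        + LinearMap.rTensor L ((psi (φ : L →ₗ[K] Derivation K R R) x : Derivation K R R) : R →ₗ[K] R) y
        - LinearMap.rTensor L ((psi (φ : L →ₗ[K] Derivation K R R) y : Derivation K R R) : R →ₗ[K] R) x)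
      = ⁅psi (φ : L →ₗ[K] Derivation K R R) x, psi (φ : L →ₗ[K] Derivation K R R) y⁆ := by
  set ψ : R ⊗[K] L →ₗ[R] Derivation K R R := psi (φ : L →ₗ[K] Derivation K R R) with hψ
  induction x using TensorProduct.induction_on with
  | zero =>
      simp [zero_lie, map_zero, Derivation.coe_zero_linearMap, LinearMap.rTensor_zero]
  | add x₁ x₂ h1 h2 =>
      have e : ⁅x₁ + x₂, y⁆ + LinearMap.rTensor L ((ψ (x₁ + x₂) : Derivation K R R) : R →ₗ[K] R) y
          - LinearMap.rTensor L ((ψ y : Derivation K R R) : R →ₗ[K] R) (x₁ + x₂)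
          = (⁅x₁, y⁆ + LinearMap.rTensor L ((ψ x₁ : Derivation K R R) : R →ₗ[K] R) y
              - LinearMap.rTensor L ((ψ y : Derivation K R R) : R →ₗ[K] R) x₁)
            + (⁅x₂, y⁆ + LinearMap.rTensor L ((ψ x₂ : Derivation K R R) : R →ₗ[K] R) y
              - LinearMap.rTensor L ((ψ y : Derivation K R R) : R →ₗ[K] R) x₂) := by
        rw [add_lie, map_add, Derivation.coe_add_linearMap, LinearMap.rTensor_add,
          LinearMap.add_apply, map_add]
        abel
      rw [e, map_add, h1, h2, map_add, add_lie]
  | tmul r l =>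
      induction y using TensorProduct.induction_on with
      | zero =>
          simp [lie_zero, map_zero, Derivation.coe_zero_linearMap, LinearMap.rTensor_zero]
      | add y₁ y₂ g1 g2 =>
          have e : ⁅r ⊗ₜ[K] l, y₁ + y₂⁆
              + LinearMap.rTensor L ((ψ (r ⊗ₜ[K] l) : Derivation K R R) : R →ₗ[K] R) (y₁ + y₂)
              - LinearMap.rTensor L ((ψ (y₁ + y₂) : Derivation K R R) : R →ₗ[K] R) (r ⊗ₜ[K] l)
              = (⁅r ⊗ₜ[K] l, y₁⁆ + LinearMap.rTensor L ((ψ (r ⊗ₜ[K] l) : Derivation K R R) : R →ₗ[K] R) y₁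
                  - LinearMap.rTensor L ((ψ y₁ : Derivation K R R) : R →ₗ[K] R) (r ⊗ₜ[K] l))
                + (⁅r ⊗ₜ[K] l, y₂⁆ + LinearMap.rTensor L ((ψ (r ⊗ₜ[K] l) : Derivation K R R) : R →ₗ[K] R) y₂
                  - LinearMap.rTensor L ((ψ y₂ : Derivation K R R) : R →ₗ[K] R) (r ⊗ₜ[K] l)) := by
            rw [lie_add, map_add, map_add, Derivation.coe_add_linearMap, LinearMap.rTensor_add,
              LinearMap.add_apply]
            abel
          rw [e, map_add, g1, g2, map_add, lie_add]
      | tmul s m =>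
          have hb : ⁅(r ⊗ₜ[K] l : R ⊗[K] L), s ⊗ₜ[K] m⁆ = (r * s) ⊗ₜ[K] ⁅l, m⁆ := rfl
          have h1 : ψ (r ⊗ₜ[K] l) = r • φ l := rfl
          have h2 : ψ (s ⊗ₜ[K] m) = s • φ m := rfl
          have h3 : LinearMap.rTensor L ((ψ (r ⊗ₜ[K] l) : Derivation K R R) : R →ₗ[K] R) (s ⊗ₜ[K] m)
              = (r * (φ l) s) ⊗ₜ[K] m := by
            rw [h1, LinearMap.rTensor_tmul, Derivation.coe_smul_linearMap, LinearMap.smul_apply,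
              smul_eq_mul, Derivation.coeFn_coe]
          have h4 : LinearMap.rTensor L ((ψ (s ⊗ₜ[K] m) : Derivation K R R) : R →ₗ[K] R) (r ⊗ₜ[K] l)
              = (s * (φ m) r) ⊗ₜ[K] l := by
            rw [h2, LinearMap.rTensor_tmul, Derivation.coe_smul_linearMap, LinearMap.smul_apply,
              smul_eq_mul, Derivation.coeFn_coe]
          rw [hb, h3, h4, h1, h2, smul_bracket_smul, map_sub, map_add]
          rw [psi_tmul, psi_tmul, psi_tmul]
          congr 1
          simp only [LieHom.coe_toLinearMap, LieHom.map_lie]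



lemma range_psi (φ : L →ₗ[K] Derivation K R R) :
    LinearMap.range (psi φ) = Submodule.span R (Set.range φ) := by
  apply le_antisymm
  · rintro _ ⟨x, rfl⟩
    induction x using TensorProduct.induction_on with
    | zero => simp
    | tmul r l =>
        rw [psi_tmul]
        exact Submodule.smul_mem _ _ (Submodule.subset_span ⟨l, rfl⟩)
    | add a b ha hb => rw [map_add]; exact Submodule.add_mem _ ha hb
  · rw [Submodule.span_le]
    rintro _ ⟨l, rfl⟩
    exact ⟨(1 : R) ⊗ₜ[K] l, by rw [psi_tmul, one_smul]⟩

lemma one_tmul_inj : Function.Injective (fun l : L => (1 : R) ⊗ₜ[K] l) := by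
  have h : Function.Injective (LinearMap.rTensor L (Algebra.linearMap K R)) :=
    Module.Flat.rTensor_preserves_injective_linearMap _ (algebraMap K R).injective
  intro l l' e
  have e2 : LinearMap.rTensor L (Algebra.linearMap K R) ((1 : K) ⊗ₜ[K] l)
      = LinearMap.rTensor L (Algebra.linearMap K R) ((1 : K) ⊗ₜ[K] l') := by
    simpa [LinearMap.rTensor_tmul, map_one] using e
  have e3 := h e2
  have e4 := congrArg (TensorProduct.lid K L) e3
  simpa using e4

end InjSubAux

set_option maxHeartbeats 1000000 in
open InjSubAux in
/-- Let `R` be a field extension of `K`, `L` a finite-dimensional Lie algebra over `K` of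
dimension `m`, and `k ≤ m`.  Then there exists an injective homomorphism of Lie algebras over
`K`, `φ : L → Der_K(R)`, whose image has `R`-linear span of dimension `k` over `R`, if and only
if there exist an `R`-Lie subalgebra `L̂ ⊆ R ⊗[K] L` of `R`-codimension `k` with
`L̂ ∩ {1 ⊗ l : l ∈ L} = {0}`, elements `b̄₁, …, b̄ₖ ∈ R ⊗[K] L` with
`L̂ + R b̄₁ + ⋯ + R b̄ₖ = R ⊗[K] L`, and `R`-linearly independent derivations `D₁, …, Dₖ` such
that the `R`-submodule of `𝔇` spanned by `(D₁, b̄₁), …, (Dₖ, b̄ₖ)` together with `{0} × L̂` is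
closed under the Lie bracket of `𝔇`. -/
theorem injection_iff_subalgebra_conditions
    (K R L : Type) [Field K] [Field R] [Algebra K R] [LieRing L] [LieAlgebra K L]
    [FiniteDimensional K L] (m k : ℕ) (hm : Module.finrank K L = m) (hkm : k ≤ m) :
    (∃ φ : L →ₗ⁅K⁆ Derivation K R R, Function.Injective φ ∧
      Module.finrank R (Submodule.span R (Set.range (φ : L → Derivation K R R))) = k) ↔
    (∃ Lhat : LieSubalgebra R (R ⊗[K] L),
      Module.finrank R ((R ⊗[K] L) ⧸ Lhat.toSubmodule) = k ∧
      (Lhat : Set (R ⊗[K] L)) ∩ Set.range (fun l : L => (1 : R) ⊗ₜ[K] l) = {0} ∧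
      ∃ b : Fin k → R ⊗[K] L,
        (Lhat.toSubmodule ⊔ Submodule.span R (Set.range b) = ⊤) ∧
        ∃ D : Fin k → Derivation K R R, LinearIndependent R D ∧
          (∀ p ∈ Submodule.span R
              (Set.range (fun i : Fin k => ((D i, b i) : Derivation K R R × (R ⊗[K] L))) ∪
                (fun x : R ⊗[K] L => ((0 : Derivation K R R), x)) '' (Lhat : Set (R ⊗[K] L))),
            ∀ q ∈ Submodule.span R
              (Set.range (fun i : Fin k => ((D i, b i) : Derivation K R R × (R ⊗[K] L))) ∪
                (fun x : R ⊗[K] L => ((0 : Derivation K R R), x)) '' (Lhat : Set (R ⊗[K] L))),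
            semidirectBracket K R L p q ∈ Submodule.span R
              (Set.range (fun i : Fin k => ((D i, b i) : Derivation K R R × (R ⊗[K] L))) ∪
                (fun x : R ⊗[K] L => ((0 : Derivation K R R), x)) '' (Lhat : Set (R ⊗[K] L))))) := by
  constructor
  · rintro ⟨φ, hinj, hrank⟩
    set ψ : R ⊗[K] L →ₗ[R] Derivation K R R := psi (φ : L →ₗ[K] Derivation K R R) with hψdef
    have hker_lie : ∀ {x y : R ⊗[K] L}, x ∈ LinearMap.ker ψ → y ∈ LinearMap.ker ψ →
        ⁅x, y⁆ ∈ LinearMap.ker ψ := by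
      intro x y hx hy
      rw [LinearMap.mem_ker] at hx hy ⊢
      have h := psi_bracket φ x y
      rw [← hψdef, hx, hy] at h
      simpa [Derivation.coe_zero_linearMap, LinearMap.rTensor_zero] using h
    refine ⟨{ toSubmodule := LinearMap.ker ψ, lie_mem' := fun hx hy => hker_lie hx hy }, ?_, ?_, ?_⟩
    · have e1 := (LinearMap.quotKerEquivRange ψ).finrank_eq
      rw [show ({ toSubmodule := LinearMap.ker ψ, lie_mem' := fun {x y} hx hy => hker_lie hx hy } :
          LieSubalgebra R (R ⊗[K] L)).toSubmodule = LinearMap.ker ψ from rfl]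
      rw [e1, range_psi]
      exact hrank
    · ext x
      simp only [Set.mem_inter_iff, Set.mem_range, Set.mem_singleton_iff]
      constructor
      · rintro ⟨hx1, l, rfl⟩
        have hx1' : ψ ((1 : R) ⊗ₜ[K] l) = 0 := hx1
        rw [psi_tmul, one_smul] at hx1'
        have hl : l = 0 := by
          apply hinj
          rw [show φ (0:L) = 0 from φ.map_zero]
          exact hx1'
        rw [hl, tmul_zero]
      · rintro rfl
        exact ⟨LinearMap.map_zero ψ, 0, tmul_zero _ _⟩
    · haveI : Module.Finite R (R ⊗[K] L) := inferInstance
      haveI : Module.Finite R (LinearMap.range ψ) := inferInstance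
      have hfr : Module.finrank R (LinearMap.range ψ) = k := by rw [range_psi]; exact hrank
      let B : Module.Basis (Fin k) R (LinearMap.range ψ) := Module.finBasisOfFinrankEq R _ hfr
      choose b hb using fun i => LinearMap.mem_range.mp (B i).2
      -- hb : ∀ i, ψ (b i) = ↑(B i)
      set D : Fin k → Derivation K R R := fun i => ((B i : LinearMap.range ψ) : Derivation K R R)
        with hDdef
      have hdecomp : ∀ x : R ⊗[K] L, ∃ c : Fin k → R,
          ψ x = ∑ i, c i • D i ∧ x - ∑ i, c i • b i ∈ LinearMap.ker ψ := by
        intro x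
        have hx : ψ x ∈ LinearMap.range ψ := LinearMap.mem_range_self _ x
        refine ⟨fun i => B.repr ⟨ψ x, hx⟩ i, ?_, ?_⟩
        · have h := B.sum_repr ⟨ψ x, hx⟩
          have h2 := congrArg (Submodule.subtype (LinearMap.range ψ)) h
          simp only [map_sum, map_smul, Submodule.coe_subtype] at h2
          exact h2.symm
        · rw [LinearMap.mem_ker, map_sub, map_sum]
          simp_rw [map_smul, hb]
          have h := B.sum_repr ⟨ψ x, hx⟩
          have h2 := congrArg (Submodule.subtype (LinearMap.range ψ)) h
          simp only [map_sum, map_smul, Submodule.coe_subtype] at h2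
          rw [h2, sub_self]
      refine ⟨b, ?_, D, ?_, ?_⟩
      · rw [eq_top_iff]
        rintro x -
        obtain ⟨c, hc1, hc2⟩ := hdecomp x
        refine Submodule.mem_sup.mpr ⟨x - ∑ i, c i • b i, hc2, ∑ i, c i • b i, ?_, by abel⟩
        exact Submodule.sum_mem _ fun i _ =>
          Submodule.smul_mem _ _ (Submodule.subset_span ⟨i, rfl⟩)
      · have := B.linearIndependent.map' (Submodule.subtype _) (Submodule.ker_subtype _)
        exact this
      · set Γ : R ⊗[K] L →ₗ[R] Derivation K R R × (R ⊗[K] L) := ψ.prod LinearMap.id with hΓdef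
        have hMG : Submodule.span R
            (Set.range (fun i : Fin k => ((D i, b i) : Derivation K R R × (R ⊗[K] L))) ∪
              (fun x : R ⊗[K] L => ((0 : Derivation K R R), x)) ''
                (({ toSubmodule := LinearMap.ker ψ, lie_mem' := fun {x y} hx hy => hker_lie hx hy } :
                  LieSubalgebra R (R ⊗[K] L)) : Set (R ⊗[K] L)))
            = LinearMap.range Γ := by
          apply le_antisymm
          · rw [Submodule.span_le]
            rintro p (⟨i, rfl⟩ | ⟨x, hx, rfl⟩)
            · exact ⟨b i, by simp [hΓdef, hb i, hDdef]⟩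
            · have hx0 : ψ x = 0 := hx
              exact ⟨x, by simp [hΓdef, hx0]⟩
          · rintro _ ⟨x, rfl⟩
            obtain ⟨c, hc1, hc2⟩ := hdecomp x
            have hx0 : ψ (x - ∑ i, c i • b i) = 0 := hc2
            have heq : Γ x = (∑ i, c i • ((D i, b i) : Derivation K R R × (R ⊗[K] L)))
                + ((0 : Derivation K R R), x - ∑ i, c i • b i) := by
              refine Prod.ext ?_ ?_
              · simp [hΓdef, hc1, Prod.fst_sum]
              · simp [hΓdef, Prod.snd_sum]
            rw [heq]
            refine Submodule.add_mem _ ?_ (Submodule.subset_span (Or.inr ⟨_, hc2, rfl⟩))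
            exact Submodule.sum_mem _ fun i _ =>
              Submodule.smul_mem _ _ (Submodule.subset_span (Or.inl ⟨i, rfl⟩))
        intro p hp q hq
        rw [hMG] at hp hq ⊢
        obtain ⟨x, rfl⟩ := hp
        obtain ⟨y, rfl⟩ := hq
        refine ⟨⁅x, y⁆ + LinearMap.rTensor L ((ψ x : Derivation K R R) : R →ₗ[K] R) y
          - LinearMap.rTensor L ((ψ y : Derivation K R R) : R →ₗ[K] R) x, ?_⟩
        refine Prod.ext ?_ ?_
        · exact psi_bracket φ x y
        · rfl
  · rintro ⟨Lhat, hcodim, hint, b, hsup, D, hD, hcl⟩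
    haveI : Module.Finite R (R ⊗[K] L) := inferInstance
    set N : Submodule R (R ⊗[K] L) := Lhat.toSubmodule with hNdef
    set S : Set (Derivation K R R × (R ⊗[K] L)) :=
      Set.range (fun i : Fin k => ((D i, b i) : Derivation K R R × (R ⊗[K] L))) ∪
        (fun x : R ⊗[K] L => ((0 : Derivation K R R), x)) '' (Lhat : Set (R ⊗[K] L)) with hSdef
    -- images of b span the quotient
    have hQtop : ⊤ ≤ Submodule.span R (Set.range (fun i => N.mkQ (b i))) := by
      rintro q -
      obtain ⟨x, rfl⟩ := N.mkQ_surjective q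
      have hx : x ∈ N ⊔ Submodule.span R (Set.range b) := hsup ▸ Submodule.mem_top
      obtain ⟨z, hz, w, hw, rfl⟩ := Submodule.mem_sup.mp hx
      have hz0 : N.mkQ z = 0 := by
        rw [Submodule.mkQ_apply, Submodule.Quotient.mk_eq_zero]
        exact hz
      rw [map_add, hz0, zero_add]
      have hmem : N.mkQ w ∈ Submodule.map N.mkQ (Submodule.span R (Set.range b)) :=
        Submodule.mem_map_of_mem hw
      rw [Submodule.map_span, ← Set.range_comp] at hmem
      exact hmem
    have hcard : Fintype.card (Fin k) = Module.finrank R ((R ⊗[K] L) ⧸ N) := by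
      rw [Fintype.card_fin, hcodim]
    have hbQ : LinearIndependent R (fun i => N.mkQ (b i)) :=
      linearIndependent_of_top_le_span_of_card_eq_finrank hQtop hcard
    set BQ : Module.Basis (Fin k) R ((R ⊗[K] L) ⧸ N) := Module.Basis.mk hbQ hQtop with hBQdef
    set φ₀ : R ⊗[K] L →ₗ[R] Derivation K R R := (BQ.constr R D) ∘ₗ N.mkQ with hφ₀def
    have hφ₀b : ∀ i, φ₀ (b i) = D i := by
      intro i
      have : N.mkQ (b i) = BQ i := (Module.Basis.mk_apply hbQ hQtop i).symm
      rw [hφ₀def, LinearMap.comp_apply, this, Module.Basis.constr_basis]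
    have hφ₀N : ∀ z ∈ N, φ₀ z = 0 := by
      intro z hz
      rw [hφ₀def, LinearMap.comp_apply,
        show N.mkQ z = 0 from (Submodule.Quotient.mk_eq_zero N).mpr hz, map_zero]
    -- coordinates of elements of the span
    have hC : ∀ p ∈ Submodule.span R S, ∃ c : Fin k → R,
        p.1 = ∑ i, c i • D i ∧ p.2 - ∑ i, c i • b i ∈ N := by
      intro p hp
      induction hp using Submodule.span_induction with
      | mem p hps =>
          rcases hps with ⟨i, rfl⟩ | ⟨z, hz, rfl⟩
          · refine ⟨Pi.single i 1, ?_, ?_⟩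
            · simp [Pi.single_apply]
            · simpa [Pi.single_apply] using N.zero_mem
          · exact ⟨0, by simp, by simpa using (show z ∈ N from hz)⟩
      | zero => exact ⟨0, by simp, by simpa using N.zero_mem⟩
      | add p q hp hq ihp ihq =>
          obtain ⟨c, hc1, hc2⟩ := ihp
          obtain ⟨d, hd1, hd2⟩ := ihq
          refine ⟨c + d, ?_, ?_⟩
          · simp only [Prod.fst_add, hc1, hd1, Pi.add_apply, add_smul,
              Finset.sum_add_distrib]
          · have h := N.add_mem hc2 hd2
            have e : p.2 - ∑ i, c i • b i + (q.2 - ∑ i, d i • b i)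
                = (p + q).2 - ∑ i, (c + d) i • b i := by
              simp only [Prod.snd_add, Pi.add_apply, add_smul, Finset.sum_add_distrib]
              abel
            rwa [e] at h
      | smul r p hp ihp =>
          obtain ⟨c, hc1, hc2⟩ := ihp
          refine ⟨r • c, ?_, ?_⟩
          · simp only [Prod.smul_fst, hc1, Pi.smul_apply, smul_smul, Finset.smul_sum, smul_eq_mul]
          · have h := N.smul_mem r hc2
            have e : r • (p.2 - ∑ i, c i • b i) = (r • p).2 - ∑ i, (r • c) i • b i := by
              simp only [Prod.smul_snd, Pi.smul_apply, smul_sub, Finset.smul_sum, smul_smul, smul_eq_mul]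
            rwa [e] at h
    -- every pair (φ₀ x, x) lies in the span
    have hA : ∀ x : R ⊗[K] L,
        ((φ₀ x, x) : Derivation K R R × (R ⊗[K] L)) ∈ Submodule.span R S := by
      intro x
      set c : Fin k → R := fun i => BQ.repr (N.mkQ x) i with hcdef
      have hrepr : ∑ i, c i • N.mkQ (b i) = N.mkQ x := by
        have h := BQ.sum_repr (N.mkQ x)
        simp only [hBQdef, Module.Basis.mk_apply] at h
        exact h
      have hz : x - ∑ i, c i • b i ∈ N := by
        rw [← Submodule.Quotient.mk_eq_zero N]
        have : N.mkQ (x - ∑ i, c i • b i) = 0 := by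
          rw [map_sub, map_sum]
          simp_rw [map_smul]
          rw [hrepr, sub_self]
        exact this
      have hfst : φ₀ x = ∑ i, c i • D i := by
        rw [hφ₀def, LinearMap.comp_apply, Module.Basis.constr_apply_fintype]
        simp_rw [Module.Basis.equivFun_apply]
        rfl
      have heq : ((φ₀ x, x) : Derivation K R R × (R ⊗[K] L))
          = (∑ i, c i • ((D i, b i) : Derivation K R R × (R ⊗[K] L)))
            + ((0 : Derivation K R R), x - ∑ i, c i • b i) := by
        refine Prod.ext ?_ ?_
        · simp [hfst, Prod.fst_sum]
        · simp [Prod.snd_sum]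
      rw [heq]
      refine Submodule.add_mem _ ?_ (Submodule.subset_span (Or.inr ⟨_, hz, rfl⟩))
      exact Submodule.sum_mem _ fun i _ =>
        Submodule.smul_mem _ _ (Submodule.subset_span (Or.inl ⟨i, rfl⟩))
    -- uniqueness of the first component
    have hB : ∀ p ∈ Submodule.span R S, p.1 = φ₀ p.2 := by
      intro p hp
      obtain ⟨c, hc1, hc2⟩ := hC p hp
      have e : φ₀ p.2 = φ₀ (∑ i, c i • b i) + φ₀ (p.2 - ∑ i, c i • b i) := by
        rw [← map_add]
        congr 1
        abel
      rw [e, hφ₀N _ hc2, add_zero, map_sum]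
      simp_rw [map_smul, hφ₀b]
      exact hc1
    have hB0 : ∀ p ∈ Submodule.span R S, p.1 = 0 → p.2 ∈ N := by
      intro p hp h0
      obtain ⟨c, hc1, hc2⟩ := hC p hp
      have hsum0 : ∑ i, c i • D i = 0 := by rw [← hc1, h0]
      have hc0 : ∀ i, c i = 0 := fun i =>
        linearIndependent_iff'.mp hD Finset.univ c hsum0 i (Finset.mem_univ i)
      have : ∑ i, c i • b i = 0 := by simp [hc0]
      rw [this, sub_zero] at hc2
      exact hc2
    -- the Lie algebra morphism
    set φlin : L →ₗ[K] Derivation K R R :=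
      (φ₀.restrictScalars K) ∘ₗ ((TensorProduct.mk K R L) 1) with hφlindef
    have hφmk : ∀ l : L, φlin l = φ₀ ((1 : R) ⊗ₜ[K] l) := fun l => rfl
    have hlie : ∀ l l' : L,
        φ₀ ((1 : R) ⊗ₜ[K] ⁅l, l'⁆) = ⁅φ₀ ((1 : R) ⊗ₜ[K] l), φ₀ ((1 : R) ⊗ₜ[K] l')⁆ := by
      intro l l'
      have hbr := hcl _ (hA ((1 : R) ⊗ₜ[K] l)) _ (hA ((1 : R) ⊗ₜ[K] l'))
      have hsnd : (semidirectBracket K R L (φ₀ ((1 : R) ⊗ₜ[K] l), (1 : R) ⊗ₜ[K] l)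
          (φ₀ ((1 : R) ⊗ₜ[K] l'), (1 : R) ⊗ₜ[K] l')).2 = (1 : R) ⊗ₜ[K] ⁅l, l'⁆ := by
        show ⁅(1 : R) ⊗ₜ[K] l, (1 : R) ⊗ₜ[K] l'⁆
            + LinearMap.rTensor L ((φ₀ ((1 : R) ⊗ₜ[K] l) : Derivation K R R) : R →ₗ[K] R)
              ((1 : R) ⊗ₜ[K] l')
            - LinearMap.rTensor L ((φ₀ ((1 : R) ⊗ₜ[K] l') : Derivation K R R) : R →ₗ[K] R)
              ((1 : R) ⊗ₜ[K] l) = (1 : R) ⊗ₜ[K] ⁅l, l'⁆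
        rw [LinearMap.rTensor_tmul, LinearMap.rTensor_tmul]
        rw [show ((φ₀ ((1 : R) ⊗ₜ[K] l) : Derivation K R R) : R →ₗ[K] R) 1
            = 0 from Derivation.map_one_eq_zero _]
        rw [show ((φ₀ ((1 : R) ⊗ₜ[K] l') : Derivation K R R) : R →ₗ[K] R) 1
            = 0 from Derivation.map_one_eq_zero _]
        rw [zero_tmul, zero_tmul, add_zero, sub_zero]
        rw [show ⁅(1 : R) ⊗ₜ[K] l, (1 : R) ⊗ₜ[K] l'⁆ = ((1 : R) * 1) ⊗ₜ[K] ⁅l, l'⁆ from rfl,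
          one_mul]
      have h := hB _ hbr
      rw [hsnd] at h
      exact h.symm
    have hmaplie : ∀ l l' : L, φlin ⁅l, l'⁆ = ⁅φlin l, φlin l'⁆ := by
      intro l l'
      rw [hφmk, hφmk, hφmk, hlie]
    let φLie : L →ₗ⁅K⁆ Derivation K R R :=
      { toLinearMap := φlin, map_lie' := fun {l l'} => hmaplie l l' }
    have hφLie : ∀ l : L, φLie l = φlin l := fun l => rfl
    refine ⟨φLie, ?_, ?_⟩
    · intro l l' h
      have h' : φlin l = φlin l' := h
      have hd : φ₀ ((1 : R) ⊗ₜ[K] (l - l')) = 0 := by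
        rw [tmul_sub, map_sub, ← hφmk, ← hφmk, h', sub_self]
      have hmem := hA ((1 : R) ⊗ₜ[K] (l - l'))
      have h2 : (1 : R) ⊗ₜ[K] (l - l') ∈ N := hB0 _ hmem hd
      have h3 : (1 : R) ⊗ₜ[K] (l - l') ∈
          (Lhat : Set (R ⊗[K] L)) ∩ Set.range (fun l : L => (1 : R) ⊗ₜ[K] l) :=
        ⟨h2, ⟨l - l', rfl⟩⟩
      rw [hint] at h3
      have h4 : (1 : R) ⊗ₜ[K] (l - l') = (1 : R) ⊗ₜ[K] (0 : L) := by
        rw [tmul_zero]; exact h3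
      have := InjSubAux.one_tmul_inj h4
      exact sub_eq_zero.mp this
    · have hspan : Submodule.span R (Set.range (φLie : L → Derivation K R R))
          = Submodule.span R (Set.range D) := by
        apply le_antisymm
        · rw [Submodule.span_le]
          rintro _ ⟨l, rfl⟩
          have : φLie l = ∑ i, BQ.repr (N.mkQ ((1 : R) ⊗ₜ[K] l)) i • D i := by
            rw [hφLie, hφmk, hφ₀def, LinearMap.comp_apply, Module.Basis.constr_apply_fintype]
            simp_rw [Module.Basis.equivFun_apply]
          rw [this]
          exact Submodule.sum_mem _ fun i _ =>
            Submodule.smul_mem _ _ (Submodule.subset_span ⟨i, rfl⟩)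
        · rw [Submodule.span_le]
          rintro _ ⟨i, rfl⟩
          have hx : ∀ x : R ⊗[K] L,
              φ₀ x ∈ Submodule.span R (Set.range (φLie : L → Derivation K R R)) := by
            intro x
            induction x using TensorProduct.induction_on with
            | zero => simp
            | tmul r l =>
                have : φ₀ (r ⊗ₜ[K] l) = r • φLie l := by
                  rw [hφLie, hφmk, ← map_smul]
                  congr 1
                  rw [smul_tmul', smul_eq_mul, mul_one]
                rw [this]
                exact Submodule.smul_mem _ _ (Submodule.subset_span ⟨l, rfl⟩)
            | add a c ha hc => rw [map_add]; exact Submodule.add_mem _ ha hc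
          rw [← hφ₀b i]
          exact hx (b i)
      rw [hspan, finrank_span_eq_card hD, Fintype.card_fin]
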